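/- Let W be a finitely-valued random variable jointly distributed with a finitely-valued sequence A^n = (A1, …, An), and let B^n and C^n be produced from A^n through a memoryless degraded cascade: there exist stochastic kernels q_B(b|a) and q_C(c|b) such that, conditioned on A^n, the pairs (B_i, C_i) for i = 1, …, n are mutually independent and independent of W, with Pr(B_i = b, C_i = c | A^n) = q_B(b | A_i) · q_C(c | b). Then ∑_{i=1}^{n} [ I(C_{i+1}^n; A_i | W, A^{i−1}) − I(A^{i−1}; A_i | W, B^{i−1}, C_{i+1}^n) − I(C_{i+1}^n; B_i | W, B^{i−1}) ] ≤ 0. -/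

import Mathlib

open scoped BigOperators Classical

noncomputable section

namespace BRSec

variable {Ω : Type*} [Fintype Ω]

/-- Probability that the random variable `X` takes the value `a`, under the weight `p`. -/
def prb (p : Ω → ℝ) {α : Type*} (X : Ω → α) (a : α) : ℝ :=
  ∑ ω, if X ω = a then p ω else 0

/-- `p` is a probability mass function on the finite sample space `Ω`. -/
def IsPMF (p : Ω → ℝ) : Prop :=
  (∀ ω, 0 ≤ p ω) ∧ ∑ ω, p ω = 1

/-- Shannon entropy of the finitely-valued random variable `X`. -/
def H (p : Ω → ℝ) {α : Type*} [Fintype α] (X : Ω → α) : ℝ :=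
  ∑ a, Real.negMulLog (prb p X a)

/-- Mutual information `I(X;Y)`. -/
def MI (p : Ω → ℝ) {α β : Type*} [Fintype α] [Fintype β] (X : Ω → α) (Y : Ω → β) : ℝ :=
  H p X + H p Y - H p fun ω => (X ω, Y ω)

/-- Conditional mutual information `I(X;Y|Z)`. -/
def CMI (p : Ω → ℝ) {α β γ : Type*} [Fintype α] [Fintype β] [Fintype γ]
    (X : Ω → α) (Y : Ω → β) (Z : Ω → γ) : ℝ :=
  (H p fun ω => (X ω, Z ω)) + (H p fun ω => (Y ω, Z ω))
    - (H p fun ω => (X ω, Y ω, Z ω)) - H p Z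

/-- `X → Y → Z` is a Markov chain: `X` and `Z` are conditionally independent given `Y`. -/
def MarkovTriple (p : Ω → ℝ) {α β γ : Type*} (X : Ω → α) (Y : Ω → β) (Z : Ω → γ) : Prop :=
  ∀ a b c,
    prb p (fun ω => (X ω, Y ω, Z ω)) (a, b, c) * prb p Y b
      = prb p (fun ω => (X ω, Y ω)) (a, b) * prb p (fun ω => (Y ω, Z ω)) (b, c)


section Basic

variable {p : Ω → ℝ} {α β γ : Type*}

lemma prb_nonneg (hp : ∀ ω, 0 ≤ p ω) (X : Ω → α) (a : α) : 0 ≤ prb p X a := by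
  refine Finset.sum_nonneg fun ω _ => ?_
  split
  · exact hp ω
  · exact le_refl 0

lemma prb_comp [Fintype α] (X : Ω → α) (f : α → β) (b : β) :
    prb p (fun ω => f (X ω)) b = ∑ a, if f a = b then prb p X a else 0 := by
  unfold prb
  have h1 : ∀ a : α, (if f a = b then ∑ ω, if X ω = a then p ω else 0 else 0)
      = ∑ ω, if X ω = a then (if f a = b then p ω else 0) else 0 := by
    intro a; by_cases h : f a = b <;> simp [h]
  simp_rw [h1]
  rw [Finset.sum_comm]
  refine Finset.sum_congr rfl fun ω _ => ?_
  simp [Finset.sum_ite_eq]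

lemma sum_prb [Fintype α] (X : Ω → α) : ∑ a, prb p X a = ∑ ω, p ω := by
  unfold prb
  rw [Finset.sum_comm]
  refine Finset.sum_congr rfl fun ω _ => ?_
  simp

lemma prb_comp_eq [Fintype α] (X : Ω → α) (f : α → β) (hf : Function.Injective f) (a : α) :
    prb p (fun ω => f (X ω)) (f a) = prb p X a := by
  unfold prb
  refine Finset.sum_congr rfl fun ω _ => ?_
  simp [hf.eq_iff]

lemma prb_comp_not_mem [Fintype α] (X : Ω → α) (f : α → β) (b : β)
    (hb : ∀ a, f a ≠ b) : prb p (fun ω => f (X ω)) b = 0 := by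
  unfold prb
  refine Finset.sum_eq_zero fun ω _ => ?_
  simp [hb (X ω)]

lemma H_comp_injective [Fintype α] [Fintype β] (X : Ω → α) (f : α → β)
    (hf : Function.Injective f) :
    H p (fun ω => f (X ω)) = H p X := by
  unfold H
  have himg : ∑ b ∈ Finset.univ.image f, Real.negMulLog (prb p (fun ω => f (X ω)) b)
      = ∑ a, Real.negMulLog (prb p (fun ω => f (X ω)) (f a)) :=
    Finset.sum_image (fun a _ a' _ h => hf h)
  rw [← Finset.sum_subset (Finset.subset_univ (Finset.univ.image f)), himg]
  · refine Finset.sum_congr rfl fun a _ => ?_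
    rw [prb_comp_eq X f hf]
  · intro b _ hb
    rw [prb_comp_not_mem X f b, Real.negMulLog_zero]
    intro a hfa
    exact hb (Finset.mem_image.2 ⟨a, Finset.mem_univ a, hfa⟩)

lemma prb_snd_pair [Fintype α] [Fintype β] (X : Ω → α) (Y : Ω → β) (b : β) :
    prb p Y b = ∑ a, prb p (fun ω => (X ω, Y ω)) (a, b) := by
  have := prb_comp (p := p) (fun ω => (X ω, Y ω)) Prod.snd b
  simp only [Fintype.sum_prod_type] at this
  rw [show (fun ω => Prod.snd (X ω, Y ω)) = Y from rfl] at this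
  rw [this]
  refine Finset.sum_congr rfl fun a _ => ?_
  simp [Finset.sum_ite_eq']

end Basic

lemma sum_q_log_nonneg [Fintype α] [Fintype β] [Fintype γ]
    (q : α → β → γ → ℝ) (hq : ∀ x y z, 0 ≤ q x y z)
    (h1 : ∑ x, ∑ y, ∑ z, q x y z = 1) :
    0 ≤ ∑ x, ∑ y, ∑ z, q x y z *
      (Real.log (q x y z) + Real.log (∑ x', ∑ y', q x' y' z)
        - Real.log (∑ y', q x y' z) - Real.log (∑ x', q x' y z)) := by
  classical
  set a : γ → ℝ := fun z => ∑ x', ∑ y', q x' y' z with ha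
  set b : α → γ → ℝ := fun x z => ∑ y', q x y' z with hb
  set c : β → γ → ℝ := fun y z => ∑ x', q x' y z with hc
  have hb0 : ∀ x z, 0 ≤ b x z := fun x z => Finset.sum_nonneg fun y _ => hq x y z
  have hc0 : ∀ y z, 0 ≤ c y z := fun y z => Finset.sum_nonneg fun x _ => hq x y z
  have ha0 : ∀ z, 0 ≤ a z := fun z => Finset.sum_nonneg fun x _ => hb0 x z
  have hqb : ∀ x y z, q x y z ≤ b x z := fun x y z =>
    Finset.single_le_sum (fun y' _ => hq x y' z) (Finset.mem_univ y)
  have hqc : ∀ x y z, q x y z ≤ c y z := fun x y z =>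
    Finset.single_le_sum (fun x' _ => hq x' y z) (Finset.mem_univ x)
  have hba : ∀ x z, b x z ≤ a z := fun x z =>
    Finset.single_le_sum (fun x' _ => hb0 x' z) (Finset.mem_univ x)
  have key : ∀ x y z, q x y z - b x z * c y z / a z ≤ q x y z *
      (Real.log (q x y z) + Real.log (a z) - Real.log (b x z) - Real.log (c y z)) := by
    intro x y z
    by_cases hq3 : q x y z = 0
    · rw [hq3]
      have : (0:ℝ) ≤ b x z * c y z / a z :=
        div_nonneg (mul_nonneg (hb0 x z) (hc0 y z)) (ha0 z)
      simp only [zero_mul]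
      linarith
    · have hq3' : 0 < q x y z := lt_of_le_of_ne (hq x y z) (Ne.symm hq3)
      have hbp : 0 < b x z := lt_of_lt_of_le hq3' (hqb x y z)
      have hcp : 0 < c y z := lt_of_lt_of_le hq3' (hqc x y z)
      have hap : 0 < a z := lt_of_lt_of_le hbp (hba x z)
      have hg : 0 < b x z * c y z / a z := by positivity
      have hlog : Real.log (b x z * c y z / a z / q x y z)
          ≤ b x z * c y z / a z / q x y z - 1 :=
        Real.log_le_sub_one_of_pos (div_pos hg hq3')
      have hL : Real.log (b x z * c y z / a z / q x y z)
          = Real.log (b x z) + Real.log (c y z) - Real.log (a z) - Real.log (q x y z) := by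
        rw [Real.log_div (ne_of_gt hg) hq3,
          Real.log_div (ne_of_gt (mul_pos hbp hcp)) (ne_of_gt hap),
          Real.log_mul (ne_of_gt hbp) (ne_of_gt hcp)]
      have h2 : q x y z * Real.log (b x z * c y z / a z / q x y z)
          ≤ q x y z * (b x z * c y z / a z / q x y z - 1) :=
        mul_le_mul_of_nonneg_left hlog (le_of_lt hq3')
      have h3 : q x y z * (b x z * c y z / a z / q x y z - 1)
          = b x z * c y z / a z - q x y z := by
        field_simp
      have h4 : q x y z * (Real.log (q x y z) + Real.log (a z)
            - Real.log (b x z) - Real.log (c y z))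
          = -(q x y z * Real.log (b x z * c y z / a z / q x y z)) := by
        rw [hL]; ring
      linarith
  have step1 : ∑ x, ∑ y, ∑ z, (q x y z - b x z * c y z / a z)
      ≤ ∑ x, ∑ y, ∑ z, q x y z *
        (Real.log (q x y z) + Real.log (a z) - Real.log (b x z) - Real.log (c y z)) :=
    Finset.sum_le_sum fun x _ => Finset.sum_le_sum fun y _ =>
      Finset.sum_le_sum fun z _ => key x y z
  have hsplit : ∑ x, ∑ y, ∑ z, (q x y z - b x z * c y z / a z)
      = 1 - ∑ x, ∑ y, ∑ z, b x z * c y z / a z := by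
    rw [← h1, ← Finset.sum_sub_distrib]
    refine Finset.sum_congr rfl fun x _ => ?_
    rw [← Finset.sum_sub_distrib]
    refine Finset.sum_congr rfl fun y _ => ?_
    rw [← Finset.sum_sub_distrib]
  have hbca : ∑ x, ∑ y, ∑ z, b x z * c y z / a z ≤ 1 := by
    have hre : ∑ x, ∑ y, ∑ z, b x z * c y z / a z
        = ∑ z, ∑ x, ∑ y, b x z * c y z / a z :=
      (Finset.sum_congr rfl fun x _ => Finset.sum_comm).trans Finset.sum_comm
    have hz : ∀ z, ∑ x, ∑ y, b x z * c y z / a z = if a z = 0 then 0 else a z := by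
      intro z
      by_cases haz : a z = 0
      · rw [if_pos haz]
        refine Finset.sum_eq_zero fun x _ => Finset.sum_eq_zero fun y _ => ?_
        have : b x z = 0 := le_antisymm (haz ▸ hba x z) (hb0 x z)
        rw [this, zero_mul, zero_div]
      · rw [if_neg haz]
        have hca : ∀ z, ∑ y, c y z = a z := fun z => by
          rw [ha]; exact Finset.sum_comm
        have hx : ∀ x, ∑ y, b x z * c y z / a z = b x z := by
          intro x
          rw [← Finset.sum_div, ← Finset.mul_sum, hca z,
            mul_div_assoc, div_self haz, mul_one]
        rw [Finset.sum_congr rfl fun x _ => hx x]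
    have hsa : ∑ z, a z = 1 := by
      rw [← h1]
      exact Finset.sum_comm.trans (Finset.sum_congr rfl fun _ _ => Finset.sum_comm)
    calc ∑ x, ∑ y, ∑ z, b x z * c y z / a z
        = ∑ z, (if a z = 0 then 0 else a z) := by
          rw [hre]; exact Finset.sum_congr rfl fun z _ => hz z
      _ ≤ ∑ z, a z := Finset.sum_le_sum fun z _ => by
          by_cases haz : a z = 0 <;> simp [haz, ha0 z]
      _ = 1 := hsa
  linarith

lemma sum_q_log_zero [Fintype α] [Fintype β] [Fintype γ]
    (q : α → β → γ → ℝ) (hq : ∀ x y z, 0 ≤ q x y z)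
    (hfac : ∀ x y z, q x y z * (∑ x', ∑ y', q x' y' z)
      = (∑ y', q x y' z) * (∑ x', q x' y z)) :
    (∑ x, ∑ y, ∑ z, q x y z *
      (Real.log (q x y z) + Real.log (∑ x', ∑ y', q x' y' z)
        - Real.log (∑ y', q x y' z) - Real.log (∑ x', q x' y z))) = 0 := by
  classical
  refine Finset.sum_eq_zero fun x _ => Finset.sum_eq_zero fun y _ =>
    Finset.sum_eq_zero fun z _ => ?_
  by_cases hq3 : q x y z = 0
  · rw [hq3, zero_mul]
  · have hq3' : 0 < q x y z := lt_of_le_of_ne (hq x y z) (Ne.symm hq3)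
    have hbp : 0 < ∑ y', q x y' z :=
      lt_of_lt_of_le hq3' (Finset.single_le_sum (fun y' _ => hq x y' z) (Finset.mem_univ y))
    have hcp : 0 < ∑ x', q x' y z :=
      lt_of_lt_of_le hq3' (Finset.single_le_sum (fun x' _ => hq x' y z) (Finset.mem_univ x))
    have hap : 0 < ∑ x', ∑ y', q x' y' z :=
      lt_of_lt_of_le hbp (Finset.single_le_sum
        (fun x' _ => Finset.sum_nonneg fun y' _ => hq x' y' z) (Finset.mem_univ x))
    have h5 : Real.log (q x y z) + Real.log (∑ x', ∑ y', q x' y' z)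
        = Real.log (∑ y', q x y' z) + Real.log (∑ x', q x' y z) := by
      rw [← Real.log_mul hq3 (ne_of_gt hap), ← Real.log_mul (ne_of_gt hbp) (ne_of_gt hcp),
        hfac x y z]
    rw [show Real.log (q x y z) + Real.log (∑ x', ∑ y', q x' y' z)
        - Real.log (∑ y', q x y' z) - Real.log (∑ x', q x' y z)
        = (Real.log (q x y z) + Real.log (∑ x', ∑ y', q x' y' z))
          - (Real.log (∑ y', q x y' z) + Real.log (∑ x', q x' y z)) by ring, h5]
    simp


section CMIcore

variable [Fintype α] [Fintype β] [Fintype γ] (X : Ω → α) (Y : Ω → β) (Z : Ω → γ)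

private lemma sum_ite_pair {α' γ' : Type*} [Fintype α'] [Fintype γ'] (g : α' → γ' → ℝ)
    (x : α') (z : γ') :
    (∑ a, ∑ c, if (a, c) = (x, z) then g a c else 0) = g x z := by
  simp [Prod.mk.injEq, ite_and, Finset.sum_ite_eq']

lemma prb_XZ (x : α) (z : γ) :
    prb p (fun ω => (X ω, Z ω)) (x, z)
      = ∑ y, prb p (fun ω => (X ω, Y ω, Z ω)) (x, y, z) := by
  refine (prb_comp (fun ω => (X ω, Y ω, Z ω)) (fun t => (t.1, t.2.2)) (x, z)).trans ?_
  simp only [Fintype.sum_prod_type]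
  simp [Prod.mk.injEq, ite_and, Finset.sum_ite_eq']

lemma prb_YZ (y : β) (z : γ) :
    prb p (fun ω => (Y ω, Z ω)) (y, z)
      = ∑ x, prb p (fun ω => (X ω, Y ω, Z ω)) (x, y, z) := by
  refine (prb_comp (fun ω => (X ω, Y ω, Z ω)) (fun t => (t.2.1, t.2.2)) (y, z)).trans ?_
  simp only [Fintype.sum_prod_type]
  simp [Prod.mk.injEq, ite_and, Finset.sum_ite_eq']

lemma prb_Z3 (z : γ) :
    prb p Z z = ∑ x, ∑ y, prb p (fun ω => (X ω, Y ω, Z ω)) (x, y, z) := by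
  refine (prb_comp (fun ω => (X ω, Y ω, Z ω)) (fun t => t.2.2) z).trans ?_
  simp only [Fintype.sum_prod_type]
  simp [Finset.sum_ite_eq']


lemma negMulLog_sum {ι : Type*} (s : Finset ι) (f : ι → ℝ) (v : ℝ) (hv : v = ∑ i ∈ s, f i) :
    Real.negMulLog v = ∑ i ∈ s, (-(f i) * Real.log v) := by
  have h1 : Real.negMulLog v = -v * Real.log v := rfl
  have h2 : -v = ∑ i ∈ s, -(f i) := by rw [hv, ← Finset.sum_neg_distrib]
  rw [h1, h2, Finset.sum_mul]

lemma prb_Z_XZ (Y : Ω → β) (z : γ) :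
    prb p Z z = ∑ x, prb p (fun ω => (X ω, Z ω)) (x, z) := by
  rw [prb_Z3 X Y Z]
  exact Finset.sum_congr rfl fun x _ => (prb_XZ X Y Z x z).symm

lemma prb_Z_YZ (X : Ω → α) (z : γ) :
    prb p Z z = ∑ y, prb p (fun ω => (Y ω, Z ω)) (y, z) := by
  rw [prb_Z3 X Y Z, Finset.sum_comm]
  exact Finset.sum_congr rfl fun y _ => (prb_YZ X Y Z y z).symm

lemma cmi_eq_sum :
    CMI p X Y Z = ∑ x, ∑ y, ∑ z,
      prb p (fun ω => (X ω, Y ω, Z ω)) (x, y, z) *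
        (Real.log (prb p (fun ω => (X ω, Y ω, Z ω)) (x, y, z))
          + Real.log (prb p Z z)
          - Real.log (prb p (fun ω => (X ω, Z ω)) (x, z))
          - Real.log (prb p (fun ω => (Y ω, Z ω)) (y, z))) := by
  have hT1 : (H p fun ω => (X ω, Z ω))
      = ∑ x, ∑ y, ∑ z, (-(prb p (fun ω => (X ω, Y ω, Z ω)) (x, y, z))
          * Real.log (prb p (fun ω => (X ω, Z ω)) (x, z))) := by
    unfold H
    rw [Fintype.sum_prod_type]
    refine Finset.sum_congr rfl fun x _ => ?_
    rw [Finset.sum_congr rfl fun z _ =>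
      negMulLog_sum Finset.univ _ _ (prb_XZ X Y Z x z)]
    exact Finset.sum_comm
  have hT2 : (H p fun ω => (Y ω, Z ω))
      = ∑ x, ∑ y, ∑ z, (-(prb p (fun ω => (X ω, Y ω, Z ω)) (x, y, z))
          * Real.log (prb p (fun ω => (Y ω, Z ω)) (y, z))) := by
    unfold H
    rw [Fintype.sum_prod_type]
    have h1 : ∀ y : β, (∑ z, Real.negMulLog (prb p (fun ω => (Y ω, Z ω)) (y, z)))
        = ∑ x, ∑ z, (-(prb p (fun ω => (X ω, Y ω, Z ω)) (x, y, z))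
            * Real.log (prb p (fun ω => (Y ω, Z ω)) (y, z))) := by
      intro y
      rw [Finset.sum_congr rfl fun z _ =>
        negMulLog_sum Finset.univ _ _ (prb_YZ X Y Z y z)]
      exact Finset.sum_comm
    rw [Finset.sum_congr rfl fun y _ => h1 y]
    exact Finset.sum_comm
  have hT3 : (H p fun ω => (X ω, Y ω, Z ω))
      = ∑ x, ∑ y, ∑ z, Real.negMulLog (prb p (fun ω => (X ω, Y ω, Z ω)) (x, y, z)) := by
    unfold H
    simp only [Fintype.sum_prod_type]
  have hT4 : H p Z
      = ∑ x, ∑ y, ∑ z, (-(prb p (fun ω => (X ω, Y ω, Z ω)) (x, y, z))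
          * Real.log (prb p Z z)) := by
    unfold H
    rw [Finset.sum_congr rfl fun z _ =>
      negMulLog_sum Finset.univ _ _ (prb_Z_XZ X Z Y z)]
    have h1 : ∀ z : γ, ∀ x : α, (-(prb p (fun ω => (X ω, Z ω)) (x, z)) * Real.log (prb p Z z))
        = ∑ y, (-(prb p (fun ω => (X ω, Y ω, Z ω)) (x, y, z)) * Real.log (prb p Z z)) := by
      intro z x
      rw [show (-(prb p (fun ω => (X ω, Z ω)) (x, z))) = ∑ y, -(prb p (fun ω => (X ω, Y ω, Z ω)) (x, y, z)) by
        rw [prb_XZ X Y Z x z, ← Finset.sum_neg_distrib], Finset.sum_mul]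
    rw [Finset.sum_congr rfl fun z _ => Finset.sum_congr rfl fun x _ => h1 z x]
    rw [Finset.sum_comm]
    exact Finset.sum_congr rfl fun x _ => Finset.sum_comm
  unfold CMI
  rw [hT1, hT2, hT3, hT4]
  rw [← Finset.sum_add_distrib, ← Finset.sum_sub_distrib, ← Finset.sum_sub_distrib]
  refine Finset.sum_congr rfl fun x _ => ?_
  rw [← Finset.sum_add_distrib, ← Finset.sum_sub_distrib, ← Finset.sum_sub_distrib]
  refine Finset.sum_congr rfl fun y _ => ?_
  rw [← Finset.sum_add_distrib, ← Finset.sum_sub_distrib, ← Finset.sum_sub_distrib]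
  refine Finset.sum_congr rfl fun z _ => ?_
  have : Real.negMulLog (prb p (fun ω => (X ω, Y ω, Z ω)) (x, y, z))
      = -(prb p (fun ω => (X ω, Y ω, Z ω)) (x, y, z))
        * Real.log (prb p (fun ω => (X ω, Y ω, Z ω)) (x, y, z)) := rfl
  rw [this]; ring


lemma sum3_prb_eq_one (hp : IsPMF p) :
    ∑ x, ∑ y, ∑ z, prb p (fun ω => (X ω, Y ω, Z ω)) (x, y, z) = 1 := by
  have h := sum_prb (p := p) (fun ω => (X ω, Y ω, Z ω))
  rw [hp.2] at h
  rw [← h]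
  simp only [Fintype.sum_prod_type]

lemma cmi_nonneg (hp : IsPMF p) : 0 ≤ CMI p X Y Z := by
  rw [cmi_eq_sum X Y Z]
  simp only [prb_Z3 X Y Z, prb_XZ X Y Z, prb_YZ X Y Z]
  refine sum_q_log_nonneg _ (fun x y z => prb_nonneg hp.1 _ _) ?_
  exact sum3_prb_eq_one X Y Z hp

lemma cmi_zero_of_factor (hp0 : ∀ ω, 0 ≤ p ω)
    (hfac : ∀ x y z, prb p (fun ω => (X ω, Y ω, Z ω)) (x, y, z) * prb p Z z
      = prb p (fun ω => (X ω, Z ω)) (x, z) * prb p (fun ω => (Y ω, Z ω)) (y, z)) :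
    CMI p X Y Z = 0 := by
  rw [cmi_eq_sum X Y Z]
  simp only [prb_Z3 X Y Z, prb_XZ X Y Z, prb_YZ X Y Z] at hfac ⊢
  exact sum_q_log_zero _ (fun x y z => prb_nonneg hp0 _ _) hfac

lemma cmi_zero_of_kernel (hp0 : ∀ ω, 0 ≤ p ω) (k : γ → α → ℝ)
    (hk : ∀ x y z, prb p (fun ω => (X ω, Y ω, Z ω)) (x, y, z)
      = k z x * prb p (fun ω => (Y ω, Z ω)) (y, z)) :
    CMI p X Y Z = 0 := by
  refine cmi_zero_of_factor X Y Z hp0 fun x y z => ?_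
  have hbx : prb p (fun ω => (X ω, Z ω)) (x, z) = k z x * prb p Z z := by
    rw [prb_XZ X Y Z x z, Finset.sum_congr rfl fun y' _ => hk x y' z,
      ← Finset.mul_sum, ← prb_Z_YZ Y Z X z]
  rw [hbx, hk x y z]
  ring

end CMIcore

section Struct

variable [Fintype α] [Fintype β] [Fintype γ]

lemma cmi_comp {α' β' γ' : Type*} [Fintype α'] [Fintype β'] [Fintype γ']
    (X : Ω → α) (Y : Ω → β) (Z : Ω → γ) (f : α → α') (g : β → β') (h : γ → γ')
    (hf : Function.Injective f) (hg : Function.Injective g) (hh : Function.Injective h) :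
    CMI p (fun ω => f (X ω)) (fun ω => g (Y ω)) (fun ω => h (Z ω)) = CMI p X Y Z := by
  simp only [CMI]
  have e1 : H p (fun ω => (f (X ω), h (Z ω))) = H p (fun ω => (X ω, Z ω)) :=
    H_comp_injective (fun ω => (X ω, Z ω)) (Prod.map f h) (hf.prodMap hh)
  have e2 : H p (fun ω => (g (Y ω), h (Z ω))) = H p (fun ω => (Y ω, Z ω)) :=
    H_comp_injective (fun ω => (Y ω, Z ω)) (Prod.map g h) (hg.prodMap hh)
  have e3 : H p (fun ω => (f (X ω), g (Y ω), h (Z ω))) = H p (fun ω => (X ω, Y ω, Z ω)) :=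
    H_comp_injective (fun ω => (X ω, Y ω, Z ω)) (Prod.map f (Prod.map g h))
      (hf.prodMap (hg.prodMap hh))
  have e4 : H p (fun ω => h (Z ω)) = H p Z := H_comp_injective Z h hh
  rw [e1, e2, e3, e4]

lemma cmi_symm (X : Ω → α) (Y : Ω → β) (Z : Ω → γ) :
    CMI p X Y Z = CMI p Y X Z := by
  simp only [CMI]
  have e : H p (fun ω => (Y ω, X ω, Z ω)) = H p (fun ω => (X ω, Y ω, Z ω)) :=
    H_comp_injective (fun ω => (X ω, Y ω, Z ω)) (fun t => (t.2.1, t.1, t.2.2))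
      (by rintro ⟨a, b, c⟩ ⟨a', b', c'⟩ hab
          simp only [Prod.mk.injEq] at hab ⊢; tauto)
  rw [e]; ring

lemma cmi_chain {β' : Type*} [Fintype β'] (X : Ω → α) (Y : Ω → β) (Y' : Ω → β') (Z : Ω → γ) :
    CMI p X (fun ω => (Y ω, Y' ω)) Z
      = CMI p X Y Z + CMI p X Y' (fun ω => (Y ω, Z ω)) := by
  simp only [CMI]
  have e1 : H p (fun ω => (Y' ω, Y ω, Z ω)) = H p (fun ω => ((Y ω, Y' ω), Z ω)) :=
    H_comp_injective (fun ω => ((Y ω, Y' ω), Z ω)) (fun t => (t.1.2, t.1.1, t.2))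
      (by rintro ⟨⟨a, b⟩, c⟩ ⟨⟨a', b'⟩, c'⟩ hab
          simp only [Prod.mk.injEq] at hab ⊢; tauto)
  have e2 : H p (fun ω => (X ω, Y' ω, Y ω, Z ω)) = H p (fun ω => (X ω, (Y ω, Y' ω), Z ω)) :=
    H_comp_injective (fun ω => (X ω, (Y ω, Y' ω), Z ω))
      (fun t => (t.1, t.2.1.2, t.2.1.1, t.2.2))
      (by rintro ⟨a, ⟨b, b2⟩, c⟩ ⟨a', ⟨b', b2'⟩, c'⟩ hab
          simp only [Prod.mk.injEq] at hab ⊢; tauto)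
  rw [e1, e2]; ring

lemma cmi_const_left (x₀ : α) (Y : Ω → β) (Z : Ω → γ) :
    CMI p (fun _ => x₀) Y Z = 0 := by
  simp only [CMI]
  have e1 : H p (fun _ω => ((x₀ : α), Z _ω)) = H p Z :=
    H_comp_injective Z (fun z => (x₀, z)) (by intro a b hab; simpa using hab)
  have e2 : H p (fun ω => ((x₀ : α), Y ω, Z ω)) = H p (fun ω => (Y ω, Z ω)) :=
    H_comp_injective (fun ω => (Y ω, Z ω)) (fun t => (x₀, t)) (by intro a b hab; simpa using hab)
  rw [e1, e2]; ring

lemma cmi_swapY {β' : Type*} [Fintype β'] (X : Ω → α) (Y : Ω → β) (Y' : Ω → β') (Z : Ω → γ) :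
    CMI p X (fun ω => (Y ω, Y' ω)) Z = CMI p X (fun ω => (Y' ω, Y ω)) Z := by
  simp only [CMI]
  have e1 : H p (fun ω => ((Y' ω, Y ω), Z ω)) = H p (fun ω => ((Y ω, Y' ω), Z ω)) :=
    H_comp_injective (fun ω => ((Y ω, Y' ω), Z ω)) (fun t => ((t.1.2, t.1.1), t.2))
      (by rintro ⟨⟨a, b⟩, c⟩ ⟨⟨a', b'⟩, c'⟩ hab
          simp only [Prod.mk.injEq] at hab ⊢; tauto)
  have e2 : H p (fun ω => (X ω, (Y' ω, Y ω), Z ω)) = H p (fun ω => (X ω, (Y ω, Y' ω), Z ω)) :=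
    H_comp_injective (fun ω => (X ω, (Y ω, Y' ω), Z ω))
      (fun t => (t.1, (t.2.1.2, t.2.1.1), t.2.2))
      (by rintro ⟨a, ⟨b, b2⟩, c⟩ ⟨a', ⟨b', b2'⟩, c'⟩ hab
          simp only [Prod.mk.injEq] at hab ⊢; tauto)
  rw [e1, e2]

lemma cmi_swapZ {γ' : Type*} [Fintype γ'] (X : Ω → α) (Y : Ω → β) (Z : Ω → γ) (Z' : Ω → γ') :
    CMI p X Y (fun ω => (Z ω, Z' ω)) = CMI p X Y (fun ω => (Z' ω, Z ω)) := by
  simp only [CMI]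
  have e1 : H p (fun ω => (X ω, Z' ω, Z ω)) = H p (fun ω => (X ω, Z ω, Z' ω)) :=
    H_comp_injective (fun ω => (X ω, Z ω, Z' ω)) (fun t => (t.1, t.2.2, t.2.1))
      (by rintro ⟨a, b, c⟩ ⟨a', b', c'⟩ hab
          simp only [Prod.mk.injEq] at hab ⊢; tauto)
  have e2 : H p (fun ω => (Y ω, Z' ω, Z ω)) = H p (fun ω => (Y ω, Z ω, Z' ω)) :=
    H_comp_injective (fun ω => (Y ω, Z ω, Z' ω)) (fun t => (t.1, t.2.2, t.2.1))
      (by rintro ⟨a, b, c⟩ ⟨a', b', c'⟩ hab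
          simp only [Prod.mk.injEq] at hab ⊢; tauto)
  have e3 : H p (fun ω => (X ω, Y ω, Z' ω, Z ω)) = H p (fun ω => (X ω, Y ω, Z ω, Z' ω)) :=
    H_comp_injective (fun ω => (X ω, Y ω, Z ω, Z' ω))
      (fun t => (t.1, t.2.1, t.2.2.2, t.2.2.1))
      (by rintro ⟨a, b, c, d⟩ ⟨a', b', c', d'⟩ hab
          simp only [Prod.mk.injEq] at hab ⊢; tauto)
  have e4 : H p (fun ω => (Z' ω, Z ω)) = H p (fun ω => (Z ω, Z' ω)) :=
    H_comp_injective (fun ω => (Z ω, Z' ω)) (fun t => (t.2, t.1))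
      (by rintro ⟨a, b⟩ ⟨a', b'⟩ hab
          simp only [Prod.mk.injEq] at hab ⊢; tauto)
  rw [e1, e2, e3, e4]

lemma cmi_rot3Z {γ' γ'' : Type*} [Fintype γ'] [Fintype γ'']
    (X : Ω → α) (Y : Ω → β) (Z₁ : Ω → γ) (Z₂ : Ω → γ') (Z₃ : Ω → γ'') :
    CMI p X Y (fun ω => (Z₁ ω, Z₂ ω, Z₃ ω)) = CMI p X Y (fun ω => (Z₂ ω, Z₁ ω, Z₃ ω)) := by
  simp only [CMI]
  have e1 : H p (fun ω => (X ω, Z₂ ω, Z₁ ω, Z₃ ω)) = H p (fun ω => (X ω, Z₁ ω, Z₂ ω, Z₃ ω)) :=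
    H_comp_injective (fun ω => (X ω, Z₁ ω, Z₂ ω, Z₃ ω))
      (fun t => (t.1, t.2.2.1, t.2.1, t.2.2.2))
      (by rintro ⟨a, b, c, d⟩ ⟨a', b', c', d'⟩ hab
          simp only [Prod.mk.injEq] at hab ⊢; tauto)
  have e2 : H p (fun ω => (Y ω, Z₂ ω, Z₁ ω, Z₃ ω)) = H p (fun ω => (Y ω, Z₁ ω, Z₂ ω, Z₃ ω)) :=
    H_comp_injective (fun ω => (Y ω, Z₁ ω, Z₂ ω, Z₃ ω))
      (fun t => (t.1, t.2.2.1, t.2.1, t.2.2.2))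
      (by rintro ⟨a, b, c, d⟩ ⟨a', b', c', d'⟩ hab
          simp only [Prod.mk.injEq] at hab ⊢; tauto)
  have e3 : H p (fun ω => (X ω, Y ω, Z₂ ω, Z₁ ω, Z₃ ω))
      = H p (fun ω => (X ω, Y ω, Z₁ ω, Z₂ ω, Z₃ ω)) :=
    H_comp_injective (fun ω => (X ω, Y ω, Z₁ ω, Z₂ ω, Z₃ ω))
      (fun t => (t.1, t.2.1, t.2.2.2.1, t.2.2.1, t.2.2.2.2))
      (by rintro ⟨a, b, c, d, e⟩ ⟨a', b', c', d', e'⟩ hab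
          simp only [Prod.mk.injEq] at hab ⊢; tauto)
  have e4 : H p (fun ω => (Z₂ ω, Z₁ ω, Z₃ ω)) = H p (fun ω => (Z₁ ω, Z₂ ω, Z₃ ω)) :=
    H_comp_injective (fun ω => (Z₁ ω, Z₂ ω, Z₃ ω))
      (fun t => (t.2.1, t.1, t.2.2))
      (by rintro ⟨a, b, c⟩ ⟨a', b', c'⟩ hab
          simp only [Prod.mk.injEq] at hab ⊢; tauto)
  rw [e1, e2, e3, e4]

end Struct

section Csiszar

variable {n : ℕ} {𝒲 : Type*}

def lo (X : Ω → Fin n → α) (k : ℕ) : Ω → ({j : Fin n // j.1 < k} → α) :=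
  fun ω j => X ω j.1

def hi (X : Ω → Fin n → α) (k : ℕ) : Ω → ({j : Fin n // k ≤ j.1} → α) :=
  fun ω j => X ω j.1

def gsplitLo (i : Fin n) : ({j : Fin n // j.1 < i.1 + 1} → α)
    → ({j : Fin n // j.1 < i.1} → α) × α :=
  fun f => (fun j => f ⟨j.1, Nat.lt_succ_of_lt j.2⟩, f ⟨i, Nat.lt_succ_self _⟩)

lemma gsplitLo_inj (i : Fin n) : Function.Injective (gsplitLo (α := α) i) := by
  intro f f' hff
  obtain ⟨h1, h2⟩ := Prod.mk.injEq .. ▸ hff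
  funext j
  obtain ⟨⟨jv, hjn⟩, hj⟩ := j
  rcases Nat.lt_succ_iff_lt_or_eq.1 hj with hlt | heq
  · exact congrFun h1 ⟨⟨jv, hjn⟩, hlt⟩
  · have : (⟨jv, hjn⟩ : Fin n) = i := Fin.ext heq
    subst this
    exact h2

def gsplitHi (i : Fin n) : ({j : Fin n // i.1 ≤ j.1} → γ)
    → γ × ({j : Fin n // i.1 + 1 ≤ j.1} → γ) :=
  fun f => (f ⟨i, le_refl _⟩, fun j => f ⟨j.1, Nat.le_of_succ_le j.2⟩)

lemma gsplitHi_inj (i : Fin n) : Function.Injective (gsplitHi (γ := γ) i) := by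
  intro f f' hff
  obtain ⟨h1, h2⟩ := Prod.mk.injEq .. ▸ hff
  funext j
  obtain ⟨⟨jv, hjn⟩, hj⟩ := j
  rcases Nat.lt_or_ge i.1 jv with hlt | hge
  · exact congrFun h2 ⟨⟨jv, hjn⟩, hlt⟩
  · have : (⟨jv, hjn⟩ : Fin n) = i := Fin.ext (le_antisymm hge hj)
    subst this
    exact h1

variable [Fintype 𝒲] [Fintype α] [Fintype γ]

set_option maxHeartbeats 1000000 in
lemma csiszar (p : Ω → ℝ) (W' : Ω → 𝒲) (S : Ω → Fin n → α) (T : Ω → Fin n → γ) :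
    ∑ i : Fin n, CMI p (hi T (i.1 + 1)) (fun ω => S ω i) (fun ω => (W' ω, lo S i.1 ω))
      = ∑ i : Fin n, CMI p (lo S i.1) (fun ω => T ω i)
          (fun ω => (W' ω, hi T (i.1 + 1) ω)) := by
  classical
  set ψ : ℕ → ℝ := fun k => CMI p (hi T k) (lo S k) W' with hψ
  have key : ∀ i : Fin n,
      CMI p (hi T (i.1 + 1)) (fun ω => S ω i) (fun ω => (W' ω, lo S i.1 ω))
        - CMI p (lo S i.1) (fun ω => T ω i) (fun ω => (W' ω, hi T (i.1 + 1) ω))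
      = ψ (i.1 + 1) - ψ i.1 := by
    intro i
    have a1 : ψ (i.1 + 1)
        = CMI p (hi T (i.1 + 1)) (fun ω => (lo S i.1 ω, S ω i)) W' :=
      (cmi_comp (hi T (i.1 + 1)) (lo S (i.1 + 1)) W' id (gsplitLo i) id
        Function.injective_id (gsplitLo_inj i) Function.injective_id).symm
    have a2 : CMI p (hi T (i.1 + 1)) (fun ω => (lo S i.1 ω, S ω i)) W'
        = CMI p (hi T (i.1 + 1)) (lo S i.1) W'
          + CMI p (hi T (i.1 + 1)) (fun ω => S ω i) (fun ω => (lo S i.1 ω, W' ω)) :=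
      cmi_chain _ _ _ _
    have a3 : CMI p (hi T (i.1 + 1)) (fun ω => S ω i) (fun ω => (lo S i.1 ω, W' ω))
        = CMI p (hi T (i.1 + 1)) (fun ω => S ω i) (fun ω => (W' ω, lo S i.1 ω)) :=
      (cmi_swapZ (hi T (i.1 + 1)) (fun ω => S ω i) W' (lo S i.1)).symm
    have b1 : ψ i.1
        = CMI p (fun ω => (T ω i, hi T (i.1 + 1) ω)) (lo S i.1) W' :=
      (cmi_comp (hi T i.1) (lo S i.1) W' (gsplitHi i) id id
        (gsplitHi_inj i) Function.injective_id Function.injective_id).symm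
    have b2 : CMI p (fun ω => (T ω i, hi T (i.1 + 1) ω)) (lo S i.1) W'
        = CMI p (lo S i.1) (fun ω => (hi T (i.1 + 1) ω, T ω i)) W' :=
      (cmi_symm _ _ _).trans (cmi_swapY (lo S i.1) (fun ω => T ω i) (hi T (i.1 + 1)) W')
    have b3 : CMI p (lo S i.1) (fun ω => (hi T (i.1 + 1) ω, T ω i)) W'
        = CMI p (lo S i.1) (hi T (i.1 + 1)) W'
          + CMI p (lo S i.1) (fun ω => T ω i) (fun ω => (hi T (i.1 + 1) ω, W' ω)) :=
      cmi_chain _ _ _ _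
    have b4 : CMI p (lo S i.1) (hi T (i.1 + 1)) W'
        = CMI p (hi T (i.1 + 1)) (lo S i.1) W' := cmi_symm _ _ _
    have b5 : CMI p (lo S i.1) (fun ω => T ω i) (fun ω => (hi T (i.1 + 1) ω, W' ω))
        = CMI p (lo S i.1) (fun ω => T ω i) (fun ω => (W' ω, hi T (i.1 + 1) ω)) :=
      (cmi_swapZ (lo S i.1) (fun ω => T ω i) W' (hi T (i.1 + 1))).symm
    linarith [a1, a2, a3, b1, b2, b3, b4, b5]
  have tele : ∑ i : Fin n,
        (CMI p (hi T (i.1 + 1)) (fun ω => S ω i) (fun ω => (W' ω, lo S i.1 ω))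
          - CMI p (lo S i.1) (fun ω => T ω i) (fun ω => (W' ω, hi T (i.1 + 1) ω)))
      = ψ n - ψ 0 := by
    rw [Finset.sum_congr rfl fun i _ => key i]
    rw [Fin.sum_univ_eq_sum_range (fun k => ψ (k + 1) - ψ k) n]
    exact Finset.sum_range_sub ψ n
  have hψn : ψ n = 0 := by
    have hconst : hi T n = fun _ω => (fun j : {j : Fin n // n ≤ j.1} =>
        (absurd j.1.isLt (Nat.not_lt.mpr j.2) : γ)) := by
      funext ω j
      exact absurd j.1.isLt (Nat.not_lt.mpr j.2)
    rw [hψ]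
    simp only []
    rw [hconst]
    exact cmi_const_left _ _ _
  have hψ0 : ψ 0 = 0 := by
    have hconst : lo S 0 = fun _ω => (fun j : {j : Fin n // j.1 < 0} =>
        (absurd j.2 (Nat.not_lt_zero _) : α)) := by
      funext ω j
      exact absurd j.2 (Nat.not_lt_zero _)
    rw [hψ]
    simp only []
    rw [cmi_symm, hconst]
    exact cmi_const_left _ _ _
  rw [Finset.sum_sub_distrib] at tele
  rw [hψn, hψ0] at tele
  linarith

end Csiszar

section Kernel

variable {n : ℕ} {𝒲 : Type*}

variable [Fintype α] [Fintype β] [Fintype γ]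

/-- transition kernel from `a` to `c` through the cascade -/
def rK (qB : α → β → ℝ) (qC : β → γ → ℝ) : α → γ → ℝ :=
  fun a c => ∑ b, qB a b * qC b c

/-- per-coordinate factor after summing out `b` and `c` -/
def EE (qB : α → β → ℝ) (qC : β → γ → ℝ) (i : Fin n)
    (b' : {j : Fin n // j.1 < i.1} → β) (c'' : {j : Fin n // i.1 + 1 ≤ j.1} → γ)
    (ic : γ → ℝ) (av : Fin n → α) (j : Fin n) : ℝ :=
  if hj : i.1 < j.1 then rK qB qC (av j) (c'' ⟨j, hj⟩)
  else if hj' : j.1 < i.1 then qB (av j) (b' ⟨j, hj'⟩)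
  else ∑ u, qB (av j) u * (∑ y, ic y * qC u y)

lemma inner_eval (qB : α → β → ℝ) (qC : β → γ → ℝ)
    (hqC1 : ∀ b, ∑ c, qC b c = 1) (i : Fin n)
    (b' : {j : Fin n // j.1 < i.1} → β) (c'' : {j : Fin n // i.1 + 1 ≤ j.1} → γ)
    (ic : γ → ℝ) (av : Fin n → α) :
    (∑ b : Fin n → β, ∑ c : Fin n → γ,
      (if (fun j : {j : Fin n // j.1 < i.1} => b j.1) = b' then (1:ℝ) else 0)
        * ((if (fun j : {j : Fin n // i.1 + 1 ≤ j.1} => c j.1) = c'' then (1:ℝ) else 0)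
          * (ic (c i) * ∏ j, qB (av j) (b j) * qC (b j) (c j))))
      = ∏ j, EE qB qC i b' c'' ic av j := by
  classical
  -- the per-coordinate factors
  set gv : Fin n → β → ℝ := fun j u =>
    if hj : i.1 < j.1 then qC u (c'' ⟨j, hj⟩)
    else if j = i then (∑ y, ic y * qC u y) else 1 with hgv
  -- step 1 : sum out c for a fixed b
  have hstep1 : ∀ b : Fin n → β,
      (∑ c : Fin n → γ,
        (if (fun j : {j : Fin n // i.1 + 1 ≤ j.1} => c j.1) = c'' then (1:ℝ) else 0)
          * (ic (c i) * ∏ j, qC (b j) (c j)))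
      = ∏ j, gv j (b j) := by
    intro b
    set gC : Fin n → γ → ℝ := fun j x =>
      (if hj : i.1 < j.1 then (if x = c'' ⟨j, hj⟩ then (1:ℝ) else 0)
        else if j = i then ic x else 1) * qC (b j) x with hgC
    have claim1 : ∀ c : Fin n → γ,
        (if (fun j : {j : Fin n // i.1 + 1 ≤ j.1} => c j.1) = c'' then (1:ℝ) else 0)
          * (ic (c i) * ∏ j, qC (b j) (c j))
        = ∏ j, gC j (c j) := by
      intro c
      by_cases h : (fun j : {j : Fin n // i.1 + 1 ≤ j.1} => c j.1) = c''
      · rw [if_pos h, one_mul]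
        have hpt : ∀ (j : Fin n) (hj : i.1 < j.1), c j = c'' ⟨j, hj⟩ :=
          fun j hj => congrFun h ⟨j, hj⟩
        have hfac : ∀ j : Fin n, gC j (c j)
            = (if j = i then ic (c i) else 1) * qC (b j) (c j) := by
          intro j
          by_cases hj : i.1 < j.1
          · have hne : j ≠ i := by
              rintro rfl; exact absurd hj (lt_irrefl _)
            rw [hgC]
            simp only [dif_pos hj, if_pos (hpt j hj), if_neg hne]
          · rw [hgC]
            simp only [dif_neg hj]
            by_cases hji : j = i
            · subst hji; simp
            · simp [hji]
        rw [Finset.prod_congr rfl (fun j _ => hfac j), Finset.prod_mul_distrib]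
        congr 1
        rw [Finset.prod_eq_single i (fun j _ hne => if_neg hne) (by simp)]
        simp
      · rw [if_neg h, zero_mul]
        symm
        have : ∃ j : {j : Fin n // i.1 + 1 ≤ j.1}, c j.1 ≠ c'' j := by
          by_contra hc
          push_neg at hc
          exact h (funext hc)
        obtain ⟨j₀, hj₀⟩ := this
        refine Finset.prod_eq_zero (Finset.mem_univ j₀.1) ?_
        rw [hgC]
        simp only [dif_pos (Nat.lt_of_succ_le j₀.2)]
        rw [if_neg (by exact hj₀), zero_mul]
    rw [Finset.sum_congr rfl fun c _ => claim1 c]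
    rw [show (∑ c : Fin n → γ, ∏ j, gC j (c j)) = ∏ j, ∑ x, gC j x from
      (Fintype.prod_sum (fun j x => gC j x)).symm]
    refine Finset.prod_congr rfl fun j _ => ?_
    rw [hgC, hgv]
    by_cases hj : i.1 < j.1
    · simp only [dif_pos hj]
      simp [ite_mul, Finset.sum_ite_eq']
    · simp only [dif_neg hj]
      by_cases hji : j = i
      · simp [hji]
      · simp [hji, hqC1 (b j)]
  -- step 2 : rewrite the inner double sum and sum out b
  have hsplit : ∀ (b : Fin n → β),
      (∑ c : Fin n → γ,
        (if (fun j : {j : Fin n // j.1 < i.1} => b j.1) = b' then (1:ℝ) else 0)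
          * ((if (fun j : {j : Fin n // i.1 + 1 ≤ j.1} => c j.1) = c'' then (1:ℝ) else 0)
            * (ic (c i) * ∏ j, qB (av j) (b j) * qC (b j) (c j))))
      = (if (fun j : {j : Fin n // j.1 < i.1} => b j.1) = b' then (1:ℝ) else 0)
          * ((∏ j, qB (av j) (b j)) * ∏ j, gv j (b j)) := by
    intro b
    rw [← Finset.mul_sum]
    congr 1
    rw [← hstep1 b, Finset.mul_sum]
    refine Finset.sum_congr rfl fun c _ => ?_
    rw [Finset.prod_mul_distrib]
    ring
  rw [Finset.sum_congr rfl fun b _ => hsplit b]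
  -- now sum out b
  set gB : Fin n → β → ℝ := fun j u =>
    (if hj' : j.1 < i.1 then (if u = b' ⟨j, hj'⟩ then (1:ℝ) else 0) else 1)
      * (qB (av j) u * gv j u) with hgB
  have claim2 : ∀ b : Fin n → β,
      (if (fun j : {j : Fin n // j.1 < i.1} => b j.1) = b' then (1:ℝ) else 0)
        * ((∏ j, qB (av j) (b j)) * ∏ j, gv j (b j))
      = ∏ j, gB j (b j) := by
    intro b
    by_cases h : (fun j : {j : Fin n // j.1 < i.1} => b j.1) = b'
    · rw [if_pos h, one_mul, ← Finset.prod_mul_distrib]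
      refine (Finset.prod_congr rfl fun j _ => ?_).symm
      rw [hgB]
      by_cases hj' : j.1 < i.1
      · simp only [dif_pos hj', if_pos (congrFun h ⟨j, hj'⟩), one_mul]
      · simp only [dif_neg hj', one_mul]
    · rw [if_neg h, zero_mul]
      symm
      have : ∃ j : {j : Fin n // j.1 < i.1}, b j.1 ≠ b' j := by
        by_contra hc
        push_neg at hc
        exact h (funext hc)
      obtain ⟨j₀, hj₀⟩ := this
      refine Finset.prod_eq_zero (Finset.mem_univ j₀.1) ?_
      rw [hgB]
      simp only [dif_pos j₀.2]
      rw [if_neg (by exact hj₀), zero_mul]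
  rw [Finset.sum_congr rfl fun b _ => claim2 b]
  rw [show (∑ b : Fin n → β, ∏ j, gB j (b j)) = ∏ j, ∑ u, gB j u from
    (Fintype.prod_sum (fun j u => gB j u)).symm]
  refine Finset.prod_congr rfl fun j _ => ?_
  rw [hgB, hgv, EE]
  by_cases hj : i.1 < j.1
  · have hj' : ¬ j.1 < i.1 := by omega
    have hji : j ≠ i := by rintro rfl; exact absurd hj (lt_irrefl _)
    simp only [dif_pos hj, dif_neg hj', hji, if_false, one_mul]
    rfl
  · by_cases hj' : j.1 < i.1
    · have hji : j ≠ i := by rintro rfl; exact absurd hj' (lt_irrefl _)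
      simp only [dif_neg hj, dif_pos hj', hji, if_false, ite_mul, one_mul, zero_mul]
      simp [Finset.sum_ite_eq']
    · have hji : j = i := Fin.ext (by omega)
      simp only [dif_neg hj, dif_neg hj', hji, if_true, one_mul]
      simp [hji]

lemma sum_boole_mul {ι : Type*} [Fintype ι] (x₀ : ι) (f : ι → ℝ) :
    ∑ x, (if x = x₀ then (1:ℝ) else 0) * f x = f x₀ := by
  simp [ite_mul, Finset.sum_ite_eq']

lemma EE_ne (qB : α → β → ℝ) (qC : β → γ → ℝ) (i : Fin n)
    (b' : {j : Fin n // j.1 < i.1} → β) (c'' : {j : Fin n // i.1 + 1 ≤ j.1} → γ)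
    (ic ic' : γ → ℝ) (av : Fin n → α) (j : Fin n) (hne : j ≠ i) :
    EE qB qC i b' c'' ic av j = EE qB qC i b' c'' ic' av j := by
  rw [EE, EE]
  by_cases hj : i.1 < j.1
  · rw [dif_pos hj, dif_pos hj]
  · by_cases hj' : j.1 < i.1
    · rw [dif_neg hj, dif_neg hj, dif_pos hj', dif_pos hj']
    · exact absurd (Fin.ext (by omega)) hne

lemma inner_ratio (qB : α → β → ℝ) (qC : β → γ → ℝ)
    (hqB1 : ∀ a, ∑ b, qB a b = 1) (hqC1 : ∀ b, ∑ c, qC b c = 1) (i : Fin n)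
    (b' : {j : Fin n // j.1 < i.1} → β) (c'' : {j : Fin n // i.1 + 1 ≤ j.1} → γ)
    (c₀ : γ) (av : Fin n → α) :
    (∏ j, EE qB qC i b' c'' (fun y => if y = c₀ then (1:ℝ) else 0) av j)
      = rK qB qC (av i) c₀ * ∏ j, EE qB qC i b' c'' (fun _ => (1:ℝ)) av j := by
  classical
  have hi1 : EE qB qC i b' c'' (fun y => if y = c₀ then (1:ℝ) else 0) av i
      = rK qB qC (av i) c₀ := by
    rw [EE]
    rw [dif_neg (lt_irrefl _), dif_neg (lt_irrefl _)]
    rw [rK]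
    refine Finset.sum_congr rfl fun u _ => ?_
    congr 1
    simp [ite_mul, Finset.sum_ite_eq']
  have hi2 : EE qB qC i b' c'' (fun _ => (1:ℝ)) av i = 1 := by
    rw [EE]
    rw [dif_neg (lt_irrefl _), dif_neg (lt_irrefl _)]
    simp only [one_mul]
    rw [Finset.sum_congr rfl fun u _ => by rw [hqC1 u, mul_one]]
    exact hqB1 (av i)
  rw [← Finset.mul_prod_erase Finset.univ _ (Finset.mem_univ i), hi1]
  rw [← Finset.mul_prod_erase Finset.univ
    (EE qB qC i b' c'' (fun _ => (1:ℝ)) av) (Finset.mem_univ i), hi2]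
  rw [Finset.prod_congr rfl fun j hj =>
    EE_ne qB qC i b' c'' _ (fun _ => (1:ℝ)) av j (Finset.ne_of_mem_erase hj)]
  ring

set_option maxHeartbeats 2000000 in
lemma kernel_fact (p : Ω → ℝ) [Fintype 𝒲]
    (W : Ω → 𝒲) (A : Ω → Fin n → α) (B : Ω → Fin n → β) (C : Ω → Fin n → γ)
    (qB : α → β → ℝ) (qC : β → γ → ℝ)
    (hqB1 : ∀ a, ∑ b, qB a b = 1) (hqC1 : ∀ b, ∑ c, qC b c = 1)
    (hjoint : ∀ (w : 𝒲) (a : Fin n → α) (b : Fin n → β) (c : Fin n → γ),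
      prb p (fun ω => (W ω, A ω, B ω, C ω)) (w, a, b, c)
        = prb p (fun ω => (W ω, A ω)) (w, a) * ∏ i, (qB (a i) (b i) * qC (b i) (c i)))
    (i : Fin n) (c₀ : γ)
    (y : ({j : Fin n // j.1 < i.1} → α) × ({j : Fin n // j.1 < i.1} → β) × 𝒲
      × ({j : Fin n // i.1 + 1 ≤ j.1} → γ)) (a₀ : α) :
    prb p (fun ω => (C ω i, (lo A i.1 ω, lo B i.1 ω, W ω, hi C (i.1 + 1) ω), A ω i))
        (c₀, y, a₀)
      = rK qB qC a₀ c₀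
        * prb p (fun ω => ((lo A i.1 ω, lo B i.1 ω, W ω, hi C (i.1 + 1) ω), A ω i))
            (y, a₀) := by
  classical
  obtain ⟨a', b', w₀, c''⟩ := y
  -- the two inner-sum evaluations
  have hie1 : ∀ av : Fin n → α,
      (∑ b : Fin n → β, ∑ c : Fin n → γ,
        (if (fun j : {j : Fin n // j.1 < i.1} => b j.1) = b' then (1:ℝ) else 0)
          * ((if (fun j : {j : Fin n // i.1 + 1 ≤ j.1} => c j.1) = c'' then (1:ℝ) else 0)
            * ((if c i = c₀ then (1:ℝ) else 0) * ∏ j, qB (av j) (b j) * qC (b j) (c j))))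
      = ∏ j, EE qB qC i b' c'' (fun y => if y = c₀ then (1:ℝ) else 0) av j :=
    fun av => inner_eval qB qC hqC1 i b' c'' (fun y => if y = c₀ then (1:ℝ) else 0) av
  have hie2 : ∀ av : Fin n → α,
      (∑ b : Fin n → β, ∑ c : Fin n → γ,
        (if (fun j : {j : Fin n // j.1 < i.1} => b j.1) = b' then (1:ℝ) else 0)
          * ((if (fun j : {j : Fin n // i.1 + 1 ≤ j.1} => c j.1) = c'' then (1:ℝ) else 0)
            * ∏ j, qB (av j) (b j) * qC (b j) (c j)))
      = ∏ j, EE qB qC i b' c'' (fun _ => (1:ℝ)) av j := by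
    intro av
    have h := inner_eval qB qC hqC1 i b' c'' (fun _ => (1:ℝ)) av
    simp only [one_mul] at h
    exact h
  -- left side
  have hL : prb p (fun ω => (C ω i, (lo A i.1 ω, lo B i.1 ω, W ω, hi C (i.1 + 1) ω), A ω i))
        (c₀, (a', b', w₀, c''), a₀)
      = ∑ w, ∑ av : Fin n → α,
          (if w = w₀ then (1:ℝ) else 0)
            * ((if ((fun j : {j : Fin n // j.1 < i.1} => av j.1) = a' ∧ av i = a₀)
                then prb p (fun ω => (W ω, A ω)) (w₀, av) else 0)
              * (∑ b : Fin n → β, ∑ c : Fin n → γ,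
                (if (fun j : {j : Fin n // j.1 < i.1} => b j.1) = b' then (1:ℝ) else 0)
                  * ((if (fun j : {j : Fin n // i.1 + 1 ≤ j.1} => c j.1) = c''
                      then (1:ℝ) else 0)
                    * ((if c i = c₀ then (1:ℝ) else 0)
                      * ∏ j, qB (av j) (b j) * qC (b j) (c j))))) := by
    refine (prb_comp (fun ω => (W ω, A ω, B ω, C ω))
      (fun v => (v.2.2.2 i,
        ((fun j : {j : Fin n // j.1 < i.1} => v.2.1 j.1),
         (fun j : {j : Fin n // j.1 < i.1} => v.2.2.1 j.1), v.1,
         (fun j : {j : Fin n // i.1 + 1 ≤ j.1} => v.2.2.2 j.1)), v.2.1 i))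
      (c₀, (a', b', w₀, c''), a₀)).trans ?_
    simp only [Fintype.sum_prod_type, Prod.mk.injEq, hjoint]
    refine Finset.sum_congr rfl fun w _ => ?_
    refine Finset.sum_congr rfl fun av _ => ?_
    simp only [Finset.mul_sum]
    refine Finset.sum_congr rfl fun b _ => ?_
    refine Finset.sum_congr rfl fun c _ => ?_
    by_cases h1 : c i = c₀ <;>
      by_cases h2 : (fun j : {j : Fin n // j.1 < i.1} => av j.1) = a' <;>
      by_cases h3 : (fun j : {j : Fin n // j.1 < i.1} => b j.1) = b' <;>
      by_cases h4 : w = w₀ <;>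
      by_cases h5 : (fun j : {j : Fin n // i.1 + 1 ≤ j.1} => c j.1) = c'' <;>
      by_cases h6 : av i = a₀ <;>
      simp [h1, h2, h3, h4, h5, h6]
  -- right side
  have hR : prb p (fun ω => ((lo A i.1 ω, lo B i.1 ω, W ω, hi C (i.1 + 1) ω), A ω i))
        ((a', b', w₀, c''), a₀)
      = ∑ w, ∑ av : Fin n → α,
          (if w = w₀ then (1:ℝ) else 0)
            * ((if ((fun j : {j : Fin n // j.1 < i.1} => av j.1) = a' ∧ av i = a₀)
                then prb p (fun ω => (W ω, A ω)) (w₀, av) else 0)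
              * (∑ b : Fin n → β, ∑ c : Fin n → γ,
                (if (fun j : {j : Fin n // j.1 < i.1} => b j.1) = b' then (1:ℝ) else 0)
                  * ((if (fun j : {j : Fin n // i.1 + 1 ≤ j.1} => c j.1) = c''
                      then (1:ℝ) else 0)
                    * ∏ j, qB (av j) (b j) * qC (b j) (c j)))) := by
    refine (prb_comp (fun ω => (W ω, A ω, B ω, C ω))
      (fun v => (((fun j : {j : Fin n // j.1 < i.1} => v.2.1 j.1),
         (fun j : {j : Fin n // j.1 < i.1} => v.2.2.1 j.1), v.1,
         (fun j : {j : Fin n // i.1 + 1 ≤ j.1} => v.2.2.2 j.1)), v.2.1 i))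
      ((a', b', w₀, c''), a₀)).trans ?_
    simp only [Fintype.sum_prod_type, Prod.mk.injEq, hjoint]
    refine Finset.sum_congr rfl fun w _ => ?_
    refine Finset.sum_congr rfl fun av _ => ?_
    simp only [Finset.mul_sum]
    refine Finset.sum_congr rfl fun b _ => ?_
    refine Finset.sum_congr rfl fun c _ => ?_
    by_cases h2 : (fun j : {j : Fin n // j.1 < i.1} => av j.1) = a' <;>
      by_cases h3 : (fun j : {j : Fin n // j.1 < i.1} => b j.1) = b' <;>
      by_cases h4 : w = w₀ <;>
      by_cases h5 : (fun j : {j : Fin n // i.1 + 1 ≤ j.1} => c j.1) = c'' <;>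
      by_cases h6 : av i = a₀ <;>
      simp [h2, h3, h4, h5, h6]
  rw [hL, hR]
  simp only [hie1, hie2]
  simp only [← Finset.mul_sum]
  rw [sum_boole_mul w₀ _]
  conv_rhs => rw [sum_boole_mul w₀ _]
  rw [Finset.mul_sum]
  refine Finset.sum_congr rfl fun av _ => ?_
  by_cases hcond : ((fun j : {j : Fin n // j.1 < i.1} => av j.1) = a' ∧ av i = a₀)
  · rw [if_pos hcond, inner_ratio qB qC hqB1 hqC1 i b' c'' c₀ av, hcond.2]
    ring
  · rw [if_neg hcond]
    simp

end Kernel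

set_option maxHeartbeats 2000000 in
/-- Second fact of the converse proof: under the same memoryless
degraded cascade as in Statement 14,
`∑_i [ I(C_{i+1}^n; A_i | W, A^{i−1}) − I(A^{i−1}; A_i | W, B^{i−1}, C_{i+1}^n)
− I(C_{i+1}^n; B_i | W, B^{i−1}) ] ≤ 0`. -/
theorem degraded_cascade_second_fact
    (p : Ω → ℝ) (hp : IsPMF p) {n : ℕ}
    {𝒲 α β γ : Type*} [Fintype 𝒲] [Fintype α] [Fintype β] [Fintype γ]
    (W : Ω → 𝒲) (A : Ω → Fin n → α) (B : Ω → Fin n → β) (C : Ω → Fin n → γ)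
    (qB : α → β → ℝ) (qC : β → γ → ℝ)
    (hqB0 : ∀ a b, 0 ≤ qB a b) (hqB1 : ∀ a, ∑ b, qB a b = 1)
    (hqC0 : ∀ b c, 0 ≤ qC b c) (hqC1 : ∀ b, ∑ c, qC b c = 1)
    (hjoint : ∀ (w : 𝒲) (a : Fin n → α) (b : Fin n → β) (c : Fin n → γ),
      prb p (fun ω => (W ω, A ω, B ω, C ω)) (w, a, b, c)
        = prb p (fun ω => (W ω, A ω)) (w, a) * ∏ i, (qB (a i) (b i) * qC (b i) (c i))) :
    ∑ i : Fin n,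
      (CMI p (fun ω => fun j : {j : Fin n // i < j} => C ω j.1)
          (fun ω => A ω i)
          (fun ω => (W ω, fun j : {j : Fin n // j < i} => A ω j.1))
       - CMI p (fun ω => fun j : {j : Fin n // j < i} => A ω j.1)
          (fun ω => A ω i)
          (fun ω => (W ω, (fun j : {j : Fin n // j < i} => B ω j.1),
                     fun j : {j : Fin n // i < j} => C ω j.1))
       - CMI p (fun ω => fun j : {j : Fin n // i < j} => C ω j.1)
          (fun ω => B ω i)
          (fun ω => (W ω, fun j : {j : Fin n // j < i} => B ω j.1)))
    ≤ 0 := by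
  classical
  -- identify the statement's variables with the `lo`/`hi` normal forms
  have hT1 : ∀ i : Fin n,
      CMI p (fun ω => fun j : {j : Fin n // i < j} => C ω j.1)
          (fun ω => A ω i)
          (fun ω => (W ω, fun j : {j : Fin n // j < i} => A ω j.1))
        = CMI p (hi C (i.1 + 1)) (fun ω => A ω i) (fun ω => (W ω, lo A i.1 ω)) :=
    fun i => rfl
  have hT2 : ∀ i : Fin n,
      CMI p (fun ω => fun j : {j : Fin n // j < i} => A ω j.1)
          (fun ω => A ω i)
          (fun ω => (W ω, (fun j : {j : Fin n // j < i} => B ω j.1),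
                     fun j : {j : Fin n // i < j} => C ω j.1))
        = CMI p (lo A i.1) (fun ω => A ω i)
            (fun ω => (W ω, lo B i.1 ω, hi C (i.1 + 1) ω)) :=
    fun i => rfl
  have hT3 : ∀ i : Fin n,
      CMI p (fun ω => fun j : {j : Fin n // i < j} => C ω j.1)
          (fun ω => B ω i)
          (fun ω => (W ω, fun j : {j : Fin n // j < i} => B ω j.1))
        = CMI p (hi C (i.1 + 1)) (fun ω => B ω i) (fun ω => (W ω, lo B i.1 ω)) :=
    fun i => rfl
  -- key per-index inequality
  have key : ∀ i : Fin n,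
      CMI p (lo A i.1) (fun ω => C ω i) (fun ω => (W ω, hi C (i.1 + 1) ω))
        ≤ CMI p (lo B i.1) (fun ω => C ω i) (fun ω => (W ω, hi C (i.1 + 1) ω))
          + CMI p (lo A i.1) (fun ω => A ω i)
              (fun ω => (lo B i.1 ω, W ω, hi C (i.1 + 1) ω)) := by
    intro i
    -- conditional independence of `C i` from the past given `A i`
    have hCI0 : CMI p (fun ω => C ω i)
        (fun ω => (lo A i.1 ω, lo B i.1 ω, W ω, hi C (i.1 + 1) ω))
        (fun ω => A ω i) = 0 :=
      cmi_zero_of_kernel (fun ω => C ω i)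
        (fun ω => (lo A i.1 ω, lo B i.1 ω, W ω, hi C (i.1 + 1) ω))
        (fun ω => A ω i) hp.1 (fun a c => rK qB qC a c)
        (fun x yy z => kernel_fact p W A B C qB qC hqB1 hqC1 hjoint i x yy z)
    have h1 : CMI p (fun ω => C ω i)
        (fun ω => ((lo B i.1 ω, W ω, hi C (i.1 + 1) ω), lo A i.1 ω))
        (fun ω => A ω i) = 0 := by
      rw [cmi_swapY]
      exact hCI0
    have h2 := cmi_chain (p := p) (fun ω => C ω i)
      (fun ω => (lo B i.1 ω, W ω, hi C (i.1 + 1) ω)) (lo A i.1) (fun ω => A ω i)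
    have n1 := cmi_nonneg (p := p) (fun ω => C ω i)
      (fun ω => (lo B i.1 ω, W ω, hi C (i.1 + 1) ω)) (fun ω => A ω i) hp
    have n2 := cmi_nonneg (p := p) (fun ω => C ω i) (lo A i.1)
      (fun ω => ((lo B i.1 ω, W ω, hi C (i.1 + 1) ω), A ω i)) hp
    have h3 : CMI p (fun ω => C ω i) (lo A i.1)
        (fun ω => ((lo B i.1 ω, W ω, hi C (i.1 + 1) ω), A ω i)) = 0 := by
      linarith
    have hCI : CMI p (lo A i.1) (fun ω => C ω i)
        (fun ω => (A ω i, lo B i.1 ω, W ω, hi C (i.1 + 1) ω)) = 0 := by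
      rw [cmi_swapZ (lo A i.1) (fun ω => C ω i) (fun ω => A ω i)
        (fun ω => (lo B i.1 ω, W ω, hi C (i.1 + 1) ω)), cmi_symm]
      exact h3
    -- step 4 : I(A^{<i}; C_i | rest) ≤ I(A^{<i}; A_i | rest)
    have h4 := cmi_chain (p := p) (lo A i.1) (fun ω => A ω i) (fun ω => C ω i)
      (fun ω => (lo B i.1 ω, W ω, hi C (i.1 + 1) ω))
    have h5 := cmi_chain (p := p) (lo A i.1) (fun ω => C ω i) (fun ω => A ω i)
      (fun ω => (lo B i.1 ω, W ω, hi C (i.1 + 1) ω))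
    have h6 : CMI p (lo A i.1) (fun ω => (A ω i, C ω i))
          (fun ω => (lo B i.1 ω, W ω, hi C (i.1 + 1) ω))
        = CMI p (lo A i.1) (fun ω => (C ω i, A ω i))
          (fun ω => (lo B i.1 ω, W ω, hi C (i.1 + 1) ω)) :=
      cmi_swapY _ _ _ _
    have n3 := cmi_nonneg (p := p) (lo A i.1) (fun ω => A ω i)
      (fun ω => (C ω i, lo B i.1 ω, W ω, hi C (i.1 + 1) ω)) hp
    have st4 : CMI p (lo A i.1) (fun ω => C ω i)
          (fun ω => (lo B i.1 ω, W ω, hi C (i.1 + 1) ω))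
        ≤ CMI p (lo A i.1) (fun ω => A ω i)
          (fun ω => (lo B i.1 ω, W ω, hi C (i.1 + 1) ω)) := by
      linarith
    -- step 3 : I(A^{<i}; C_i | W, C_{>i}) ≤ I(B^{<i}; C_i | W, C_{>i}) + I(A^{<i}; C_i | rest)
    have c1 := cmi_chain (p := p) (fun ω => C ω i) (lo B i.1) (lo A i.1)
      (fun ω => (W ω, hi C (i.1 + 1) ω))
    have c2 := cmi_chain (p := p) (fun ω => C ω i) (lo A i.1) (lo B i.1)
      (fun ω => (W ω, hi C (i.1 + 1) ω))
    have c3 : CMI p (fun ω => C ω i) (fun ω => (lo B i.1 ω, lo A i.1 ω))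
          (fun ω => (W ω, hi C (i.1 + 1) ω))
        = CMI p (fun ω => C ω i) (fun ω => (lo A i.1 ω, lo B i.1 ω))
          (fun ω => (W ω, hi C (i.1 + 1) ω)) :=
      cmi_swapY _ _ _ _
    have n4 := cmi_nonneg (p := p) (fun ω => C ω i) (lo B i.1)
      (fun ω => (lo A i.1 ω, W ω, hi C (i.1 + 1) ω)) hp
    have s1 : CMI p (fun ω => C ω i) (lo A i.1) (fun ω => (W ω, hi C (i.1 + 1) ω))
        = CMI p (lo A i.1) (fun ω => C ω i) (fun ω => (W ω, hi C (i.1 + 1) ω)) :=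
      cmi_symm _ _ _
    have s2 : CMI p (fun ω => C ω i) (lo B i.1) (fun ω => (W ω, hi C (i.1 + 1) ω))
        = CMI p (lo B i.1) (fun ω => C ω i) (fun ω => (W ω, hi C (i.1 + 1) ω)) :=
      cmi_symm _ _ _
    have s3 : CMI p (fun ω => C ω i) (lo A i.1)
          (fun ω => (lo B i.1 ω, W ω, hi C (i.1 + 1) ω))
        = CMI p (lo A i.1) (fun ω => C ω i)
          (fun ω => (lo B i.1 ω, W ω, hi C (i.1 + 1) ω)) :=
      cmi_symm _ _ _
    linarith
  -- rewrite the three families via the two Csiszár sum identities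
  have hcsA := csiszar p W A C
  have hcsB := csiszar p W B C
  have hrot : ∀ i : Fin n,
      CMI p (lo A i.1) (fun ω => A ω i) (fun ω => (W ω, lo B i.1 ω, hi C (i.1 + 1) ω))
        = CMI p (lo A i.1) (fun ω => A ω i)
            (fun ω => (lo B i.1 ω, W ω, hi C (i.1 + 1) ω)) :=
    fun i => cmi_rot3Z _ _ _ _ _
  calc ∑ i : Fin n,
      (CMI p (fun ω => fun j : {j : Fin n // i < j} => C ω j.1)
          (fun ω => A ω i)
          (fun ω => (W ω, fun j : {j : Fin n // j < i} => A ω j.1))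
       - CMI p (fun ω => fun j : {j : Fin n // j < i} => A ω j.1)
          (fun ω => A ω i)
          (fun ω => (W ω, (fun j : {j : Fin n // j < i} => B ω j.1),
                     fun j : {j : Fin n // i < j} => C ω j.1))
       - CMI p (fun ω => fun j : {j : Fin n // i < j} => C ω j.1)
          (fun ω => B ω i)
          (fun ω => (W ω, fun j : {j : Fin n // j < i} => B ω j.1)))
      = ∑ i : Fin n,
      (CMI p (hi C (i.1 + 1)) (fun ω => A ω i) (fun ω => (W ω, lo A i.1 ω))
       - CMI p (lo A i.1) (fun ω => A ω i)
           (fun ω => (lo B i.1 ω, W ω, hi C (i.1 + 1) ω))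
       - CMI p (hi C (i.1 + 1)) (fun ω => B ω i) (fun ω => (W ω, lo B i.1 ω))) := by
        refine Finset.sum_congr rfl fun i _ => ?_
        rw [hT1 i, hT2 i, hT3 i, hrot i]
    _ = (∑ i : Fin n, CMI p (hi C (i.1 + 1)) (fun ω => A ω i) (fun ω => (W ω, lo A i.1 ω)))
        - (∑ i : Fin n, CMI p (lo A i.1) (fun ω => A ω i)
            (fun ω => (lo B i.1 ω, W ω, hi C (i.1 + 1) ω)))
        - (∑ i : Fin n, CMI p (hi C (i.1 + 1)) (fun ω => B ω i)
            (fun ω => (W ω, lo B i.1 ω))) := by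
        rw [← Finset.sum_sub_distrib, ← Finset.sum_sub_distrib]
    _ = (∑ i : Fin n, CMI p (lo A i.1) (fun ω => C ω i)
            (fun ω => (W ω, hi C (i.1 + 1) ω)))
        - (∑ i : Fin n, CMI p (lo A i.1) (fun ω => A ω i)
            (fun ω => (lo B i.1 ω, W ω, hi C (i.1 + 1) ω)))
        - (∑ i : Fin n, CMI p (lo B i.1) (fun ω => C ω i)
            (fun ω => (W ω, hi C (i.1 + 1) ω))) := by
        rw [hcsA, hcsB]
    _ ≤ 0 := by
        have hsum : ∑ i : Fin n,
            (CMI p (lo A i.1) (fun ω => C ω i) (fun ω => (W ω, hi C (i.1 + 1) ω))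
              - CMI p (lo A i.1) (fun ω => A ω i)
                  (fun ω => (lo B i.1 ω, W ω, hi C (i.1 + 1) ω))
              - CMI p (lo B i.1) (fun ω => C ω i) (fun ω => (W ω, hi C (i.1 + 1) ω)))
            ≤ 0 := by
          refine Finset.sum_nonpos fun i _ => ?_
          have := key i
          linarith
        rw [Finset.sum_sub_distrib, Finset.sum_sub_distrib] at hsum
        linarith


end BRSec
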